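/- (The average iterate performs an inexact proximal step) Let h : ℝ^d → ℝ be a convex function such that every subgradient z of h at any point satisfies ‖z‖ ≤ G_h, and let α > 0, m ≥ 1. Let q̂_1,…,q̂_m ∈ ℝ^d, let q̄ = (1/m)·Σ_{i=1}^m q̂_i, and for each i suppose x_i minimizes z ↦ h(z) + (1/(2α))‖z − q̂_i‖² over ℝ^d. Let x̄ = (1/m)·Σ_{i=1}^m x_i. Then h(x̄) + (1/(2α))‖x̄ − q̄‖² ≤ inf_{z ∈ ℝ^d}( h(z) + (1/(2α))‖z − q̄‖² ) + ε, where ε = (2·G_h/m)·Σ_{i=1}^m ‖q̂_i − q̄‖ + (1/(2α))·( (1/m)·Σ_{i=1}^m ‖q̂_i − q̄‖ )². -/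

import Mathlib

open RealInnerProductSpace

lemma prox_subgradient {d : ℕ} (h : EuclideanSpace ℝ (Fin d) → ℝ)
    (hconv : ConvexOn ℝ Set.univ h) {α : ℝ} (hα : 0 < α)
    (q p : EuclideanSpace ℝ (Fin d))
    (hp : ∀ z, h p + (1/(2*α)) * ‖p - q‖^2 ≤ h z + (1/(2*α)) * ‖z - q‖^2) :
    ∀ u, h p + ⟪α⁻¹ • (q - p), u - p⟫ ≤ h u := by
  intro u
  have hinner : ⟪α⁻¹ • (q - p), u - p⟫ = α⁻¹ * ⟪q - p, u - p⟫ := real_inner_smul_left _ _ _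
  rw [hinner]
  have key : ∀ t : ℝ, 0 < t → t ≤ 1 →
      h p + α⁻¹ * ⟪q - p, u - p⟫ ≤ h u + (t/(2*α)) * ‖u - p‖^2 := by
    intro t ht0 ht1
    have hc := hconv.2 (Set.mem_univ p) (Set.mem_univ u)
      (by linarith : (0:ℝ) ≤ 1 - t) (le_of_lt ht0) (by ring)
    simp only [smul_eq_mul] at hc
    have hopt := hp ((1 - t) • p + t • u)
    have hpt : (1 - t) • p + t • u = p + t • (u - p) := by module
    rw [hpt] at hc hopt
    have hexp : ‖p + t • (u - p) - q‖^2
        = ‖p - q‖^2 + 2 * (t * ⟪p - q, u - p⟫) + t^2 * ‖u - p‖^2 := by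
      have heq : p + t • (u - p) - q = (p - q) + t • (u - p) := by abel
      rw [heq, norm_add_sq_real, real_inner_smul_right, norm_smul]
      simp only [Real.norm_eq_abs, mul_pow, sq_abs]
    rw [hexp] at hopt
    have hpq : ⟪q - p, u - p⟫ = - ⟪p - q, u - p⟫ := by
      rw [← inner_neg_left]; congr 1; abel
    have hhalf : (1:ℝ)/(2*α) = α⁻¹ * (1/2) := by
      field_simp
    rw [hhalf] at hopt
    have h2 : h p ≤ (1 - t) * h p + t * h u
        + (α⁻¹ * (1/2)) * (2 * (t * ⟪p - q, u - p⟫) + t^2 * ‖u - p‖^2) := by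
      linarith
    rw [hpq]
    have h3 : t * (h p + α⁻¹ * (-⟪p - q, u - p⟫)) ≤ t * (h u + (t * (α⁻¹ * (1/2))) * ‖u - p‖^2) := by
      nlinarith [h2]
    have h4 := (mul_le_mul_iff_right₀ ht0).mp h3
    calc h p + α⁻¹ * -⟪p - q, u - p⟫ ≤ h u + (t * (α⁻¹ * (1/2))) * ‖u - p‖^2 := h4
      _ = h u + t / (2*α) * ‖u - p‖^2 := by field_simp
  have hsq : (0:ℝ) ≤ ‖u - p‖^2 := sq_nonneg _
  refine le_of_forall_pos_le_add ?_
  intro ε hε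
  have hden : (0:ℝ) < ‖u - p‖^2 + 1 := by linarith
  set t : ℝ := min 1 (ε * (2*α) / (‖u - p‖^2 + 1)) with ht
  have ht0 : 0 < t := lt_min one_pos (by positivity)
  have ht1 : t ≤ 1 := min_le_left _ _
  have h1 := key t ht0 ht1
  have h2 : (t/(2*α)) * ‖u - p‖^2 ≤ ε := by
    have htle : t ≤ ε * (2*α) / (‖u - p‖^2 + 1) := min_le_right _ _
    rw [div_mul_eq_mul_div, div_le_iff₀ (by linarith : (0:ℝ) < 2*α)]
    calc t * ‖u - p‖^2 ≤ (ε * (2*α) / (‖u - p‖^2 + 1)) * ‖u - p‖^2 :=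
          mul_le_mul_of_nonneg_right htle hsq
      _ ≤ ε * (2*α) := by
          rw [div_mul_eq_mul_div, div_le_iff₀ hden]
          nlinarith
  linarith

/-- The average iterate performs an inexact proximal step: if each `x_i` is the proximal
point of `h` at `q̂_i`, then the average `x̄` is an `ε`-optimal proximal point at `q̄`. -/
theorem average_inexact_prox {d m : ℕ} (hm : 1 ≤ m)
    (h : EuclideanSpace ℝ (Fin d) → ℝ)
    (hconv : ConvexOn ℝ Set.univ h) (Gh : ℝ)
    (hsub : ∀ x z : EuclideanSpace ℝ (Fin d),
      (∀ u, h x + ⟪z, u - x⟫ ≤ h u) → ‖z‖ ≤ Gh)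
    (α : ℝ) (hα : 0 < α)
    (qhat : Fin m → EuclideanSpace ℝ (Fin d))
    (x : Fin m → EuclideanSpace ℝ (Fin d))
    (hx : ∀ i, ∀ z : EuclideanSpace ℝ (Fin d),
      h (x i) + (1 / (2 * α)) * ‖x i - qhat i‖ ^ 2 ≤
        h z + (1 / (2 * α)) * ‖z - qhat i‖ ^ 2) :
    ∀ z : EuclideanSpace ℝ (Fin d),
      h ((1 / (m : ℝ)) • ∑ i, x i)
          + (1 / (2 * α)) *
            ‖(1 / (m : ℝ)) • ∑ i, x i - (1 / (m : ℝ)) • ∑ i, qhat i‖ ^ 2 ≤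
        h z + (1 / (2 * α)) * ‖z - (1 / (m : ℝ)) • ∑ i, qhat i‖ ^ 2
          + ((2 * Gh / m) * ∑ i, ‖qhat i - (1 / (m : ℝ)) • ∑ j, qhat j‖
            + (1 / (2 * α)) *
              ((1 / (m : ℝ)) * ∑ i, ‖qhat i - (1 / (m : ℝ)) • ∑ j, qhat j‖) ^ 2) := by
  intro z
  have hm0 : (0:ℝ) < (m:ℝ) := by exact_mod_cast hm
  have hmne : (m:ℝ) ≠ 0 := ne_of_gt hm0
  set xb : EuclideanSpace ℝ (Fin d) := (1 / (m : ℝ)) • ∑ i, x i with hxb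
  set qb : EuclideanSpace ℝ (Fin d) := (1 / (m : ℝ)) • ∑ i, qhat i with hqb
  set g : Fin m → EuclideanSpace ℝ (Fin d) := fun i => α⁻¹ • (qhat i - x i) with hg
  have hgsub : ∀ i, ∀ u, h (x i) + ⟪g i, u - x i⟫ ≤ h u := fun i =>
    prox_subgradient h hconv hα (qhat i) (x i) (hx i)
  have hgG : ∀ i, ‖g i‖ ≤ Gh := fun i => hsub (x i) (g i) (hgsub i)
  set gb : EuclideanSpace ℝ (Fin d) := (1 / (m : ℝ)) • ∑ i, g i with hgb
  -- gb = α⁻¹ • (qb - xb)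
  have hgbeq : gb = α⁻¹ • (qb - xb) := by
    rw [hgb, hqb, hxb]
    simp only [hg]
    rw [← Finset.smul_sum, Finset.sum_sub_distrib]
    module
  have hxieq : ∀ i, x i = qhat i - α • g i := by
    intro i
    rw [hg]
    simp [smul_smul, ne_of_gt hα, mul_inv_cancel₀ (ne_of_gt hα)]
  have hxbeq : xb = qb - α • gb := by
    rw [hgbeq, smul_smul, mul_inv_cancel₀ (ne_of_gt hα), one_smul]
    abel
  -- norm of gb
  have hgbG : ‖gb‖ ≤ Gh := by
    rw [hgb]
    have h1 : ‖∑ i, g i‖ ≤ ∑ i : Fin m, Gh := by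
      refine le_trans (norm_sum_le _ _) (Finset.sum_le_sum fun i _ => hgG i)
    rw [norm_smul]
    simp only [Finset.sum_const, Finset.card_univ, Fintype.card_fin, nsmul_eq_mul] at h1
    rw [Real.norm_eq_abs, abs_of_pos (by positivity : (0:ℝ) < 1 / (m:ℝ))]
    calc (1 / (m:ℝ)) * ‖∑ i, g i‖ ≤ (1 / (m:ℝ)) * ((m:ℝ) * Gh) := by
          exact mul_le_mul_of_nonneg_left h1 (by positivity)
      _ = Gh := by field_simp
  -- Jensen
  have hJ : h xb ≤ (1 / (m:ℝ)) * ∑ i, h (x i) := by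
    have hsum : xb = ∑ i : Fin m, (1 / (m:ℝ)) • x i := by
      rw [hxb, Finset.smul_sum]
    rw [hsum]
    have := hconv.map_sum_le (t := Finset.univ) (w := fun _ : Fin m => 1 / (m:ℝ))
      (p := x) (fun i _ => by positivity)
      (by simp [Finset.sum_const, Finset.card_univ]; field_simp)
      (fun i _ => Set.mem_univ _)
    calc h (∑ i : Fin m, (1 / (m:ℝ)) • x i) ≤ ∑ i : Fin m, (1 / (m:ℝ)) * h (x i) := this
      _ = (1 / (m:ℝ)) * ∑ i, h (x i) := by rw [Finset.mul_sum]
  -- subgradient at each x i evaluated at z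
  have hzi : ∀ i, h (x i) ≤ h z - ⟪g i, z - x i⟫ := by
    intro i; linarith [hgsub i z]
  have hSsum : ∑ i, h (x i) ≤ (m:ℝ) * h z - ∑ i, ⟪g i, z - x i⟫ := by
    have := Finset.sum_le_sum (fun i (_ : i ∈ Finset.univ) => hzi i)
    simpa [Finset.sum_sub_distrib, Finset.sum_const, Finset.card_univ, mul_comm] using this
  -- decompose the sum S
  have hdecomp : ∑ i, ⟪g i, z - x i⟫
      = (m:ℝ) * ⟪gb, z - xb⟫ + ∑ i, ⟪g i - gb, xb - x i⟫ := by
    have e1 : ∀ i, (⟪g i, z - x i⟫ : ℝ) = ⟪g i, z - xb⟫ + ⟪g i, xb - x i⟫ := by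
      intro i
      rw [← inner_add_right]
      congr 1; abel
    rw [Finset.sum_congr rfl (fun i _ => e1 i), Finset.sum_add_distrib]
    congr 1
    · rw [← sum_inner]
      have : (∑ i, g i) = (m:ℝ) • gb := by
        rw [hgb, smul_smul, mul_one_div, div_self hmne, one_smul]
      rw [this, real_inner_smul_left]
    · have e2 : ∑ i, (⟪gb, xb - x i⟫ : ℝ) = 0 := by
        rw [← inner_sum]
        have : (∑ i : Fin m, (xb - x i)) = 0 := by
          rw [Finset.sum_sub_distrib]
          simp only [Finset.sum_const, Finset.card_univ, Fintype.card_fin]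
          rw [hxb, ← Nat.cast_smul_eq_nsmul ℝ, smul_smul, mul_one_div, div_self hmne,
            one_smul, sub_self]
        rw [this, inner_zero_right]
      have e3 : ∀ i, (⟪g i, xb - x i⟫ : ℝ) = ⟪g i - gb, xb - x i⟫ + ⟪gb, xb - x i⟫ := by
        intro i
        rw [← inner_add_left]; congr 1; abel
      rw [Finset.sum_congr rfl (fun i _ => e3 i), Finset.sum_add_distrib, e2, add_zero]
  -- bound each cross term
  have hcross : ∀ i, (-⟪g i - gb, xb - x i⟫ : ℝ) ≤ 2 * Gh * ‖qhat i - qb‖ := by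
    intro i
    have hxdiff : xb - x i = -(qhat i - qb) + α • (g i - gb) := by
      rw [hxbeq, hxieq i]
      rw [smul_sub]
      abel
    have : (⟪g i - gb, xb - x i⟫ : ℝ)
        = -⟪g i - gb, qhat i - qb⟫ + α * ‖g i - gb‖^2 := by
      rw [hxdiff, inner_add_right, inner_neg_right, real_inner_smul_right,
        real_inner_self_eq_norm_sq]
    rw [this]
    have hc1 : (⟪g i - gb, qhat i - qb⟫ : ℝ) ≤ ‖g i - gb‖ * ‖qhat i - qb‖ :=
      le_trans (le_abs_self _) (abs_real_inner_le_norm _ _)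
    have hc2 : ‖g i - gb‖ ≤ 2 * Gh := by
      calc ‖g i - gb‖ ≤ ‖g i‖ + ‖gb‖ := norm_sub_le _ _
        _ ≤ 2 * Gh := by linarith [hgG i, hgbG]
    have hc3 : ‖g i - gb‖ * ‖qhat i - qb‖ ≤ 2 * Gh * ‖qhat i - qb‖ :=
      mul_le_mul_of_nonneg_right hc2 (norm_nonneg _)
    linarith [mul_nonneg hα.le (sq_nonneg ‖g i - gb‖)]
  have hT : -(∑ i, ⟪g i - gb, xb - x i⟫ : ℝ) ≤ 2 * Gh * ∑ i, ‖qhat i - qb‖ := by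
    rw [← Finset.sum_neg_distrib, Finset.mul_sum]
    exact Finset.sum_le_sum fun i _ => hcross i
  -- inner product identity
  have hαne : α ≠ 0 := ne_of_gt hα
  have hI : 2 * α * (⟪gb, z - xb⟫ : ℝ) = ‖z - xb‖^2 + ‖xb - qb‖^2 - ‖z - qb‖^2 := by
    rw [hgbeq, real_inner_smul_left]
    have hid : ‖z - qb‖^2 = ‖z - xb‖^2 - 2 * ⟪qb - xb, z - xb⟫ + ‖qb - xb‖^2 := by
      have hrw : z - qb = (z - xb) - (qb - xb) := by abel
      rw [hrw, norm_sub_sq_real, real_inner_comm (z - xb) (qb - xb)]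
    have hnn : ‖xb - qb‖ = ‖qb - xb‖ := norm_sub_rev _ _
    have lhs : 2 * α * (α⁻¹ * (⟪qb - xb, z - xb⟫ : ℝ)) = 2 * ⟪qb - xb, z - xb⟫ := by
      rw [show 2 * α * (α⁻¹ * (⟪qb - xb, z - xb⟫ : ℝ))
          = 2 * (α * α⁻¹) * ⟪qb - xb, z - xb⟫ from by ring, mul_inv_cancel₀ hαne]
      ring
    rw [hnn, lhs]
    linarith [hid]
  -- assemble
  have hfin1 : h xb ≤ h z - (⟪gb, z - xb⟫ : ℝ)
      + (1 / (m:ℝ)) * (2 * Gh * ∑ i, ‖qhat i - qb‖) := by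
    have k1 : (1 / (m:ℝ)) * ∑ i, h (x i)
        ≤ (1 / (m:ℝ)) * ((m:ℝ) * h z - ∑ i, ⟪g i, z - x i⟫) :=
      mul_le_mul_of_nonneg_left hSsum (by positivity)
    have k2 : (1 / (m:ℝ)) * ((m:ℝ) * h z - ∑ i, ⟪g i, z - x i⟫)
        = h z - ⟪gb, z - xb⟫ - (1 / (m:ℝ)) * ∑ i, ⟪g i - gb, xb - x i⟫ := by
      rw [hdecomp]; field_simp; ring
    have k3 : -((1 / (m:ℝ)) * ∑ i, ⟪g i - gb, xb - x i⟫)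
        ≤ (1 / (m:ℝ)) * (2 * Gh * ∑ i, ‖qhat i - qb‖) := by
      rw [← mul_neg]
      exact mul_le_mul_of_nonneg_left hT (by positivity)
    linarith [hJ]
  have hIval : (⟪gb, z - xb⟫ : ℝ)
      = (1/(2*α)) * (‖z - xb‖^2 + ‖xb - qb‖^2 - ‖z - qb‖^2) := by
    rw [← hI, show (1/(2*α)) * (2 * α * (⟪gb, z - xb⟫ : ℝ))
      = (α * α⁻¹) * ⟪gb, z - xb⟫ from by ring, mul_inv_cancel₀ hαne, one_mul]
  have hnz : (0:ℝ) ≤ (1/(2*α)) * ‖z - xb‖^2 := by positivity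
  have hlast : (0:ℝ) ≤ (1 / (2 * α)) *
      ((1 / (m : ℝ)) * ∑ i, ‖qhat i - qb‖) ^ 2 := by positivity
  have hdiv : (1 / (m:ℝ)) * (2 * Gh * ∑ i, ‖qhat i - qb‖)
      = (2 * Gh / (m:ℝ)) * ∑ i, ‖qhat i - qb‖ := by ring
  linarith [hfin1, hIval, hnz, hlast]
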